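/- Under the stated setup, the Ghosh–Roth query release mechanism is (α,β)-accurate: μ{x ∈ ℝ : |ŝ(x) − s| ≤ α} ≥ 1 − β, where μ is the Laplace noise distribution with rate ε. -/

import Mathlib

open MeasureTheory intervalIntegral in
private lemma lap_int (ε t : ℝ) (hε : 0 < ε) (ht : 0 ≤ t) :
    ∫ x in (-t)..t, ε / 2 * Real.exp (-(ε * |x|)) = 1 - Real.exp (-(ε * t)) := by
  have hcont : Continuous fun x : ℝ => ε / 2 * Real.exp (-(ε * |x|)) :=
    continuous_const.mul ((continuous_const.mul continuous_abs).neg.rexp)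
  have h1 : (∫ x in (0:ℝ)..t, ε / 2 * Real.exp (-(ε * |x|)))
      = ∫ x in (0:ℝ)..t, ε / 2 * Real.exp (-ε * x) := by
    apply intervalIntegral.integral_congr
    intro x hx
    rw [Set.uIcc_of_le ht] at hx
    dsimp only
    rw [abs_of_nonneg hx.1]; ring_nf
  have h2 : (∫ x in (-t)..(0:ℝ), ε / 2 * Real.exp (-(ε * |x|)))
      = ∫ x in (-t)..(0:ℝ), ε / 2 * Real.exp (ε * x) := by
    apply intervalIntegral.integral_congr
    intro x hx
    rw [Set.uIcc_of_le (by linarith : -t ≤ (0:ℝ))] at hx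
    dsimp only
    rw [abs_of_nonpos hx.2]; ring_nf
  have hd1 : ∀ x ∈ Set.uIcc (0:ℝ) t,
      HasDerivAt (fun y : ℝ => -(1/2) * Real.exp (-ε * y)) (ε / 2 * Real.exp (-ε * x)) x := by
    intro x _
    have h := (((hasDerivAt_id x).const_mul (-ε)).exp).const_mul (-(1/2) : ℝ)
    convert h using 1
    · rfl
    · rfl
    · rfl
    simp only [id_eq]; ring_nf
  have hd2 : ∀ x ∈ Set.uIcc (-t) (0:ℝ),
      HasDerivAt (fun y : ℝ => (1/2) * Real.exp (ε * y)) (ε / 2 * Real.exp (ε * x)) x := by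
    intro x _
    have h := (((hasDerivAt_id x).const_mul ε).exp).const_mul ((1/2) : ℝ)
    convert h using 1
    · rfl
    · rfl
    · rfl
    simp only [id_eq]; ring_nf
  have hi1 : IntervalIntegrable (fun x : ℝ => ε / 2 * Real.exp (-ε * x)) volume 0 t :=
    (continuous_const.mul ((continuous_const.mul continuous_id).rexp)).intervalIntegrable _ _
  have hi2 : IntervalIntegrable (fun x : ℝ => ε / 2 * Real.exp (ε * x)) volume (-t) 0 :=
    (continuous_const.mul ((continuous_const.mul continuous_id).rexp)).intervalIntegrable _ _
  have e1 : (∫ x in (0:ℝ)..t, ε / 2 * Real.exp (-ε * x))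
      = -(1/2) * Real.exp (-ε * t) - -(1/2) * Real.exp (-ε * 0) :=
    intervalIntegral.integral_eq_sub_of_hasDerivAt hd1 hi1
  have e2 : (∫ x in (-t)..(0:ℝ), ε / 2 * Real.exp (ε * x))
      = (1/2) * Real.exp (ε * 0) - (1/2) * Real.exp (ε * -t) :=
    intervalIntegral.integral_eq_sub_of_hasDerivAt hd2 hi2
  have hadd := intervalIntegral.integral_add_adjacent_intervals
    (a := -t) (b := 0) (c := t)
    (hcont.intervalIntegrable (μ := MeasureTheory.volume) _ _) (hcont.intervalIntegrable (μ := MeasureTheory.volume) _ _)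
  rw [← hadd, h1, h2, e1, e2]
  simp only [mul_zero, neg_zero, Real.exp_zero]
  rw [show ε * -t = -(ε * t) by ring, show -ε * t = -(ε * t) by ring]
  ring

/-- (α,β)-accuracy of the Ghosh–Roth query release mechanism: publishing
`ŝ(x) = (1/N)·(Σ_{i<H} bᵢ + αN/(2k) + x)` with `x` drawn from the Laplace
distribution with rate `ε = k/(αN)` (density `(ε/2)·exp(−ε·|x|)`), where
`k = 1/2 + ln(1/β)` and at most `αN/k` of the `N` bits are omitted, satisfies
`Pr[|ŝ − s| ≤ α] ≥ 1 − β` for the true proportion `s = (1/N)·Σᵢ bᵢ`. -/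
theorem stmt_5 (N : ℕ) (hN : 0 < N) (α β k : ℝ)
    (hα : α ∈ Set.Ioo (0 : ℝ) 1) (hβ : β ∈ Set.Ioo (0 : ℝ) 1)
    (hk : k = 1 / 2 + Real.log (1 / β))
    (b : Fin N → ℝ) (hb : ∀ i, b i = 0 ∨ b i = 1)
    (s : ℝ) (hs : s = (1 / (N : ℝ)) * ∑ i, b i)
    (H : ℕ) (hHN : H ≤ N) (hH : (N : ℝ) - (H : ℝ) ≤ α * N / k)
    (ε : ℝ) (hε : ε = k / (α * N))
    (μ : MeasureTheory.Measure ℝ)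
    (hμ : μ = MeasureTheory.volume.withDensity
      (fun x => ENNReal.ofReal (ε / 2 * Real.exp (-(ε * |x|)))))
    (shat : ℝ → ℝ)
    (hshat : ∀ x, shat x = (1 / (N : ℝ)) *
      ((∑ i ∈ Finset.univ.filter (fun i : Fin N => (i : ℕ) < H), b i)
        + α * N / (2 * k) + x)) :
    ENNReal.ofReal (1 - β) ≤ μ {x : ℝ | |shat x - s| ≤ α} := by
  obtain ⟨hα0, hα1⟩ := hα
  obtain ⟨hβ0, hβ1⟩ := hβ
  have hNpos : (0:ℝ) < N := Nat.cast_pos.mpr hN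
  have hlog : 0 < Real.log (1/β) := Real.log_pos (by rw [lt_div_iff₀ hβ0]; linarith)
  have hkpos : (0:ℝ) < k := by rw [hk]; linarith
  have hk2 : 1 < 2 * k := by rw [hk]; linarith
  have hεpos : 0 < ε := by rw [hε]; positivity
  have hk0 : k ≠ 0 := ne_of_gt hkpos
  have hαN : α * (N:ℝ) ≠ 0 := by positivity
  set t : ℝ := α * N - α * N / (2 * k) with htdef
  have htnn : 0 ≤ t := by
    have h : α * N / (2*k) ≤ α * N := div_le_self (by positivity) (le_of_lt hk2)
    simp only [htdef]; linarith
  have hεt : ε * t = Real.log (1/β) := by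
    have h1 : ε * t = k - 1/2 := by
      rw [hε, htdef]; field_simp
    rw [h1, hk]; ring
  have hexp : Real.exp (-(ε*t)) = β := by
    rw [hεt, Real.exp_neg, Real.exp_log (by positivity)]
    simp
  -- Sum decomposition
  have hsum := Finset.sum_filter_add_sum_filter_not Finset.univ
    (fun i : Fin N => (i:ℕ) < H) b
  set S1 := ∑ i ∈ Finset.univ.filter (fun i : Fin N => (i:ℕ) < H), b i with hS1
  set D := ∑ i ∈ Finset.univ.filter (fun i : Fin N => ¬ (i:ℕ) < H), b i with hD
  have hDnn : 0 ≤ D :=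
    Finset.sum_nonneg fun i _ => by rcases hb i with h|h <;> simp [h]
  have hcard : (Finset.univ.filter fun i : Fin N => (i:ℕ) < H).card = H := by
    rw [show (Finset.univ.filter fun i : Fin N => (i:ℕ) < H)
        = Finset.map (Fin.castLEEmb hHN) Finset.univ by
      ext i
      simp [Fin.exists_iff, Fin.lt_iff_val_lt_val, eq_comm (a := i)]
      constructor
      · intro h; exact ⟨i, h, rfl⟩
      · rintro ⟨j, hj, rfl⟩; simpa using hj]
    simp
  have hcard' : (Finset.univ.filter fun i : Fin N => ¬ (i:ℕ) < H).card = N - H := by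
    have h := Finset.card_filter_add_card_filter_not
      (s := (Finset.univ : Finset (Fin N))) (p := fun i : Fin N => (i:ℕ) < H)
    rw [hcard, Finset.card_univ, Fintype.card_fin] at h
    omega
  have hDle : D ≤ (N:ℝ) - H := by
    have h := Finset.sum_le_card_nsmul
      (Finset.univ.filter fun i : Fin N => ¬ (i:ℕ) < H) b 1
      (fun i _ => by rcases hb i with h|h <;> simp [h])
    rw [hcard'] at h
    calc D ≤ (N - H : ℕ) • (1:ℝ) := h
      _ = ((N - H : ℕ) : ℝ) := by rw [nsmul_eq_mul, mul_one]
      _ = (N:ℝ) - H := by rw [Nat.cast_sub hHN]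
  have hDle2 : D ≤ α * N / k := hDle.trans hH
  -- subset
  have hsub : Set.Icc (-t) t ⊆ {x : ℝ | |shat x - s| ≤ α} := by
    intro x hx
    simp only [Set.mem_Icc] at hx
    simp only [Set.mem_setOf_eq]
    have key : shat x - s = (x + (α*N/(2*k) - D)) / N := by
      rw [hshat, hs, ← hsum]
      field_simp
      ring
    rw [key, abs_div, abs_of_pos hNpos, div_le_iff₀ hNpos]
    have h2k : α*N/k = 2 * (α*N/(2*k)) := by field_simp
    have hc : |α*N/(2*k) - D| ≤ α*N/(2*k) := by
      rw [abs_le]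
      constructor
      · rw [h2k] at hDle2; linarith
      · linarith
    calc |x + (α*N/(2*k) - D)| ≤ |x| + |α*N/(2*k) - D| := abs_add_le _ _
      _ ≤ t + α*N/(2*k) := add_le_add (abs_le.mpr hx) hc
      _ = α * N := by rw [htdef]; ring
  -- measure of the interval
  have hIcc : μ (Set.Icc (-t) t) = ENNReal.ofReal (1 - β) := by
    rw [hμ, MeasureTheory.withDensity_apply _ measurableSet_Icc]
    have hcont : Continuous fun x : ℝ => ε / 2 * Real.exp (-(ε * |x|)) :=
      continuous_const.mul ((continuous_const.mul continuous_abs).neg.rexp)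
    have hint : MeasureTheory.IntegrableOn
        (fun x : ℝ => ε / 2 * Real.exp (-(ε * |x|))) (Set.Icc (-t) t) :=
      hcont.integrableOn_Icc
    rw [← MeasureTheory.ofReal_integral_eq_lintegral_ofReal hint
      (Filter.Eventually.of_forall fun x =>
        mul_nonneg (by linarith) (Real.exp_nonneg _))]
    congr 1
    rw [MeasureTheory.integral_Icc_eq_integral_Ioc,
      ← intervalIntegral.integral_of_le (by linarith : -t ≤ t),
      lap_int ε t hεpos htnn, hexp]
  calc ENNReal.ofReal (1 - β) = μ (Set.Icc (-t) t) := hIcc.symm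
    _ ≤ μ {x : ℝ | |shat x - s| ≤ α} := MeasureTheory.measure_mono hsub
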